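/- Let D be the diagonal operator Deₖ = dₖeₖ (dₙ strictly increasing), εₙ > 0, and qₙ the projections onto ℂfₙ with fₙ = (1+εₙ²)^{-1/2}(eₙ+εₙe_{n+1}). If a = Σ_{i=1}^{l} α_{2n_i} q_{2n_i} with n₁ < ⋯ < n_l satisfies [D,a] = 0 on the domain, then α_{2n_i} = 0 for all i; hence the only elements of A = span{1, q_{2n} : n ∈ ℕ} commuting with D are the scalar multiples of the identity. -/

import Mathlib

noncomputable section
open scoped ENNReal ComplexOrder

local notation "ℓ²" => lp (fun _ : ℕ => ℂ) 2

/-- Build an element of `ℓ²(ℕ)` from a square-summable sequence. -/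
def mkLp (f : ℕ → ℂ) (hf : Memℓp f 2) : ℓ² := ⟨f, hf⟩

@[simp] lemma mkLp_apply (f : ℕ → ℂ) (hf : Memℓp f 2) (n : ℕ) : (mkLp f hf) n = f n := rfl

/-- The standard orthonormal basis vectors of `ℓ²(ℕ)`. -/
def e (n : ℕ) : ℓ² := lp.single 2 n 1

/-- The maximal domain of the diagonal operator with eigenvalues `d n`. -/
def domD (d : ℕ → ℝ) : Submodule ℂ ℓ² where
  carrier := {x | Memℓp (fun n => (d n : ℂ) * x n) 2}
  zero_mem' := by
    show Memℓp _ 2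
    convert zero_memℓp (E := fun _ : ℕ => ℂ) (p := 2) using 1
    funext n; simp
  add_mem' := by
    intro x y hx hy
    have h := hx.add hy
    have : (fun n => (d n : ℂ) * (x + y) n) = fun n => (d n : ℂ) * x n + (d n : ℂ) * y n := by
      funext n; simp [mul_add]
    show Memℓp _ 2
    rw [this]; exact h
  smul_mem' := by
    intro c x hx
    have h := hx.const_smul c
    have : (fun n => (d n : ℂ) * (c • x) n) = fun n => c • ((d n : ℂ) * x n) := by
      funext n; simp [smul_eq_mul]; ring
    show Memℓp _ 2
    rw [this]; exact h

/-- The self-adjoint diagonal operator `D eₙ = dₙ eₙ` on its maximal domain. -/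
def Dop (d : ℕ → ℝ) : ℓ² →ₗ.[ℂ] ℓ² where
  domain := domD d
  toFun :=
    { toFun := fun x => mkLp (fun n => (d n : ℂ) * (x : ℓ²) n) x.2
      map_add' := by
        intro x y
        apply lp.ext
        funext n
        simp [mkLp, mul_add]
        rfl
      map_smul' := by
        intro c x
        apply lp.ext
        funext n
        simp [mkLp, smul_eq_mul]
        ring }

local notation "⟪" x ", " y "⟫" => @inner ℂ _ _ x y

/-- The unit vectors `fₙ = (1+εₙ²)^{-1/2}(eₙ + εₙ e_{n+1})`. -/
def f (ε : ℕ → ℝ) (n : ℕ) : ℓ² :=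
  (((1 + ε n ^ 2 : ℝ) ^ (-(1 / 2 : ℝ)) : ℝ) : ℂ) • (e n + ((ε n : ℝ) : ℂ) • e (n + 1))

/-- The rank-one orthogonal projection `qₙ` onto `ℂ fₙ`. -/
def q (ε : ℕ → ℝ) (n : ℕ) : lp (fun _ : ℕ => ℂ) 2 →L[ℂ] lp (fun _ : ℕ => ℂ) 2 :=
  (innerSL ℂ (f ε n)).smulRight (f ε n)

@[simp] lemma e_apply (n k : ℕ) : (e n) k = if k = n then 1 else 0 := by
  rw [e, lp.single_apply]
  split_ifs with h <;> simp [h]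

lemma inner_e_left (n : ℕ) (x : ℓ²) : ⟪e n, x⟫ = x n := by
  rw [e, lp.inner_single_left]
  simp

lemma q_apply (ε : ℕ → ℝ) (n : ℕ) (x : ℓ²) : q ε n x = ⟪f ε n, x⟫ • f ε n := rfl

lemma f_coord (ε : ℕ → ℝ) (n k : ℕ) :
    (f ε n) k = (((1 + ε n ^ 2 : ℝ) ^ (-(1 / 2 : ℝ)) : ℝ) : ℂ) *
      ((if k = n then 1 else 0) + ε n * (if k = n + 1 then 1 else 0)) := by
  rw [f, lp.coeFn_smul, lp.coeFn_add, lp.coeFn_smul]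
  simp [mul_add]

lemma inner_f_e (ε : ℕ → ℝ) (n k : ℕ) :
    ⟪f ε n, e k⟫ = (((1 + ε n ^ 2 : ℝ) ^ (-(1 / 2 : ℝ)) : ℝ) : ℂ) *
      ((if n = k then 1 else 0) + ε n * (if n + 1 = k then 1 else 0)) := by
  rw [f]
  rw [inner_smul_left, inner_add_left, inner_smul_left, inner_e_left, inner_e_left]
  simp [mul_add, eq_comm]

lemma Dop_coord (d : ℕ → ℝ) (x : ℓ²) (hx : x ∈ domD d) (k : ℕ) :
    (Dop d ⟨x, hx⟩ : ℓ²) k = (d k : ℂ) * x k := rfl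

lemma e_mem_domD (d : ℕ → ℝ) (m : ℕ) : e m ∈ domD d := by
  show Memℓp (fun k => (d k : ℂ) * (e m) k) 2
  have : (fun k => (d k : ℂ) * (e m) k) = fun k => (((d m : ℂ) • e m : ℓ²)) k := by
    funext k
    rw [lp.coeFn_smul]
    by_cases h : k = m <;> simp [h, smul_eq_mul]
  rw [this]
  exact lp.memℓp _

lemma f_mem_domD (d : ℕ → ℝ) (ε : ℕ → ℝ) (m : ℕ) : f ε m ∈ domD d := by
  rw [f]
  exact (domD d).smul_mem _ ((domD d).add_mem (e_mem_domD d m)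
    ((domD d).smul_mem _ (e_mem_domD d (m + 1))))

lemma Dop_e (d : ℕ → ℝ) (m : ℕ) : (Dop d ⟨e m, e_mem_domD d m⟩ : ℓ²) = (d m : ℂ) • e m := by
  apply lp.ext
  funext k
  rw [Dop_coord, lp.coeFn_smul]
  by_cases h : k = m <;> simp [h, smul_eq_mul]

lemma part1 (d : ℕ → ℝ) (hd_mono : StrictMono d) (ε : ℕ → ℝ) (hε : ∀ n, 0 < ε n)
    (l : ℕ) (n : Fin l → ℕ) (hn : StrictMono n) (α : Fin l → ℂ)
    (a : lp (fun _ : ℕ => ℂ) 2 →L[ℂ] lp (fun _ : ℕ => ℂ) 2)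
    (ha : a = ∑ i : Fin l, α i • q ε (2 * n i))
    (hcomm : ∀ ξ ∈ Submodule.span ℂ (Set.range e), ∀ (hξ : ξ ∈ domD d) (hA : a ξ ∈ domD d),
        Dop d ⟨a ξ, hA⟩ = a (Dop d ⟨ξ, hξ⟩))
    (i : Fin l) : α i = 0 := by
  set m := 2 * n i with hm
  set C : ℝ := (1 + ε m ^ 2 : ℝ) ^ (-(1 / 2 : ℝ)) with hC
  have hCpos : 0 < C := Real.rpow_pos_of_pos (by positivity) _
  have key : a (e m) = (α i * (C : ℂ)) • f ε m := by
    rw [ha]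
    rw [ContinuousLinearMap.sum_apply]
    rw [Finset.sum_eq_single i]
    · rw [ContinuousLinearMap.smul_apply, q_apply, inner_f_e]
      rw [if_pos rfl, if_neg (by omega)]
      rw [smul_smul]
      rw [hC, hm]
      ring_nf
    · intro j _ hj
      rw [ContinuousLinearMap.smul_apply, q_apply, inner_f_e]
      have h1 : 2 * n j ≠ m := by
        simp only [hm, Ne, Nat.mul_left_cancel_iff (by norm_num : 0 < 2)]
        exact fun h => hj (hn.injective h)
      have h2 : 2 * n j + 1 ≠ m := by omega
      rw [if_neg h1, if_neg h2]
      simp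
    · intro h; exact absurd (Finset.mem_univ i) h
  have hfd : f ε m ∈ domD d := f_mem_domD d ε m
  have haed : a (e m) ∈ domD d := by rw [key]; exact (domD d).smul_mem _ hfd
  have heq := hcomm (e m) (Submodule.subset_span ⟨m, rfl⟩) (e_mem_domD d m) haed
  have hco := congrArg (fun x : ℓ² => x (m + 1)) heq
  simp only [Dop_coord] at hco
  rw [Dop_e, map_smul a, key] at hco
  simp only [lp.coeFn_smul, Pi.smul_apply, smul_eq_mul] at hco
  rw [f_coord] at hco
  rw [if_neg (by omega), if_pos rfl] at hco
  have hd : (d (m + 1) : ℂ) ≠ (d m : ℂ) := by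
    exact_mod_cast ne_of_gt (by exact_mod_cast hd_mono (Nat.lt_succ_self m))
  have hC0 : (C : ℂ) ≠ 0 := by exact_mod_cast hCpos.ne'
  have hε0 : ((ε m : ℝ) : ℂ) ≠ 0 := by exact_mod_cast (hε m).ne'
  have key2 : ((d (m + 1) : ℂ) - d m) * (α i * (C : ℂ) * ((C : ℂ) * (0 + ε m * 1))) = 0 := by
    linear_combination hco
  rcases mul_eq_zero.mp key2 with h | h
  · exact absurd (sub_eq_zero.mp h) hd
  · rcases mul_eq_zero.mp h with h | h
    · rcases mul_eq_zero.mp h with h | h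
      · exact h
      · exact absurd h hC0
    · rcases mul_eq_zero.mp h with h | h
      · exact absurd h hC0
      · simp only [zero_add, mul_one] at h
        exact absurd h hε0

/-- If a linear combination `a = Σ αᵢ q_{2nᵢ}` commutes with the diagonal operator `D`
(on the span of the basis vectors), then all coefficients vanish; consequently the only
elements of `span{1, q_{2n}}` commuting with `D` are the scalar multiples of the identity. -/
theorem commutant_trivial
    (d : ℕ → ℝ) (hd_mono : StrictMono d) (ε : ℕ → ℝ) (hε : ∀ n, 0 < ε n) :
    (∀ (l : ℕ) (n : Fin l → ℕ), StrictMono n → ∀ α : Fin l → ℂ,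
      ∀ a : lp (fun _ : ℕ => ℂ) 2 →L[ℂ] lp (fun _ : ℕ => ℂ) 2,
      a = ∑ i : Fin l, α i • q ε (2 * n i) →
      (∀ ξ ∈ Submodule.span ℂ (Set.range e), ∀ (hξ : ξ ∈ domD d) (ha : a ξ ∈ domD d),
        Dop d ⟨a ξ, ha⟩ = a (Dop d ⟨ξ, hξ⟩)) →
      ∀ i, α i = 0) ∧
    (∀ a ∈ Submodule.span ℂ ({1} ∪ Set.range (fun k : ℕ => q ε (2 * k))),
      (∀ ξ ∈ Submodule.span ℂ (Set.range e), ∀ (hξ : ξ ∈ domD d) (ha : a ξ ∈ domD d),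
        Dop d ⟨a ξ, ha⟩ = a (Dop d ⟨ξ, hξ⟩)) →
      ∃ c : ℂ, a = c • (1 : lp (fun _ : ℕ => ℂ) 2 →L[ℂ] lp (fun _ : ℕ => ℂ) 2)) := by
  constructor
  · intro l n hn α a ha hcomm i
    exact part1 d hd_mono ε hε l n hn α a ha hcomm i
  · intro a hmem hcomm
    rw [Submodule.span_union] at hmem
    obtain ⟨x, hx, y, hy, rfl⟩ := Submodule.mem_sup.mp hmem
    rw [Submodule.mem_span_singleton] at hx
    obtain ⟨c, rfl⟩ := hx
    refine ⟨c, ?_⟩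
    suffices hy0 : y = 0 by rw [hy0, add_zero]
    rw [Finsupp.mem_span_range_iff_exists_finsupp] at hy
    obtain ⟨μ, hμ⟩ := hy
    set s := μ.support with hs
    set n : Fin s.card → ℕ := fun i => ((s.orderIsoOfFin rfl) i : ℕ) with hn'
    have hn : StrictMono n := fun i j hij =>
      Subtype.coe_lt_coe.mpr ((s.orderIsoOfFin rfl).strictMono hij)
    have hy_sum : y = ∑ i : Fin s.card, μ (n i) • q ε (2 * n i) := by
      rw [← hμ, Finsupp.sum]
      rw [← Finset.sum_coe_sort s (fun k => μ k • q ε (2 * k))]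
      exact (Equiv.sum_comp (s.orderIsoOfFin rfl).toEquiv
        (fun k : s => μ (k : ℕ) • q ε (2 * (k : ℕ)))).symm
    have hcommy : ∀ ξ ∈ Submodule.span ℂ (Set.range e), ∀ (hξ : ξ ∈ domD d)
        (hA : y ξ ∈ domD d), Dop d ⟨y ξ, hA⟩ = y (Dop d ⟨ξ, hξ⟩) := by
      intro ξ hξspan hξ hyξ
      have hrw : (c • 1 + y) ξ = c • ξ + y ξ := by simp
      have haξ : (c • 1 + y) ξ ∈ domD d := by
        rw [hrw]; exact (domD d).add_mem ((domD d).smul_mem c hξ) hyξ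
      have heq := hcomm ξ hξspan hξ haξ
      have hsum : (⟨(c • 1 + y) ξ, haξ⟩ : (Dop d).domain) = c • (⟨ξ, hξ⟩ : (Dop d).domain) + ⟨y ξ, hyξ⟩ := by
        apply Subtype.ext; simp [hrw]
      rw [hsum, (Dop d).map_add, (Dop d).map_smul] at heq
      have hrw2 : (c • 1 + y) (Dop d ⟨ξ, hξ⟩) =
          c • (Dop d ⟨ξ, hξ⟩ : ℓ²) + y (Dop d ⟨ξ, hξ⟩) := by simp
      rw [hrw2] at heq
      exact add_left_cancel heq
    have hall : ∀ i, μ (n i) = 0 := fun i =>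
      part1 d hd_mono ε hε s.card n hn _ y hy_sum hcommy i
    rw [hy_sum]
    exact Finset.sum_eq_zero fun i _ => by rw [hall i, zero_smul]
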